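/- In the ring jF = ℤ[b₂,b₃,b₄,b₈]/(4b₈ + b₄² − b₂b₃²), the element b₂b₄ + n·b₂³ lies in the subring generated by 2b₂, b₃, b₄, b₂², b₂b₃, b₂b₄, b₈ if and only if n is even. -/
import Mathlib


open MvPolynomial

noncomputable def jFIdeal : Ideal (MvPolynomial (Fin 4) ℤ) :=
  Ideal.span {4 * X 3 + (X 2) ^ 2 - X 0 * (X 1) ^ 2}

noncomputable abbrev jF : Type := MvPolynomial (Fin 4) ℤ ⧸ jFIdeal

noncomputable def b2 : jF := Ideal.Quotient.mk jFIdeal (X 0)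
noncomputable def b3 : jF := Ideal.Quotient.mk jFIdeal (X 1)
noncomputable def b4 : jF := Ideal.Quotient.mk jFIdeal (X 2)
noncomputable def b8 : jF := Ideal.Quotient.mk jFIdeal (X 3)

/-- The subring of `jF` generated by `2b₂, b₃, b₄, b₂², b₂b₃, b₂b₄, b₈`. -/
noncomputable def S : Subring jF :=
  Subring.closure {2 * b2, b3, b4, b2 ^ 2, b2 * b3, b2 * b4, b8}

noncomputable def psi : MvPolynomial (Fin 4) ℤ →+* Polynomial ℤ :=
  (MvPolynomial.aeval
    (![Polynomial.X, 0, 2 * Polynomial.X, -(Polynomial.X ^ 2)] :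
      Fin 4 → Polynomial ℤ)).toRingHom

lemma psi_gen : psi (4 * X 3 + (X 2) ^ 2 - X 0 * (X 1) ^ 2) = 0 := by
  simp [psi]
  ring

noncomputable def phi : jF →+* Polynomial ℤ :=
  Ideal.Quotient.lift jFIdeal psi (by
    intro a ha
    rw [jFIdeal, Ideal.mem_span_singleton] at ha
    obtain ⟨c, rfl⟩ := ha
    rw [map_mul, psi_gen, zero_mul])

lemma phi_b2 : phi b2 = Polynomial.X := by
  simp [phi, b2, psi]

lemma phi_b3 : phi b3 = 0 := by
  simp [phi, b3, psi]

lemma phi_b4 : phi b4 = 2 * Polynomial.X := by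
  simp [phi, b4, psi]

lemma phi_b8 : phi b8 = -(Polynomial.X ^ 2) := by
  simp [phi, b8, psi]

noncomputable def T' : Subring (Polynomial ℤ) where
  carrier := {p | ∀ k, Odd k → (2 : ℤ) ∣ p.coeff k}
  zero_mem' := by intro k _; simp
  one_mem' := by
    intro k hk
    rw [Polynomial.coeff_one]
    have : k ≠ 0 := by rintro rfl; simp [Nat.odd_iff] at hk
    simp [this]
  add_mem' := by
    intro p q hp hq k hk
    rw [Polynomial.coeff_add]
    exact dvd_add (hp k hk) (hq k hk)
  neg_mem' := by
    intro p hp k hk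
    rw [Polynomial.coeff_neg]
    exact (hp k hk).neg_right
  mul_mem' := by
    intro p q hp hq k hk
    rw [Polynomial.coeff_mul]
    refine Finset.dvd_sum fun x hx => ?_
    have hsum : x.1 + x.2 = k := Finset.HasAntidiagonal.mem_antidiagonal.mp hx
    have : Odd x.1 ∨ Odd x.2 := by
      simp only [Nat.odd_iff] at hk ⊢; omega
    rcases this with h | h
    · exact dvd_mul_of_dvd_left (hp x.1 h) _
    · exact dvd_mul_of_dvd_right (hq x.2 h) _

lemma X_mem_T' : Polynomial.X ^ 2 ∈ T' := by
  intro k hk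
  rw [Polynomial.coeff_X_pow]
  have : k ≠ 2 := by rintro rfl; simp [Nat.odd_iff] at hk
  simp [this]

lemma twoX_mem_T' : 2 * Polynomial.X ∈ T' := by
  intro k hk
  rcases eq_or_ne k 1 with rfl | h
  · simp
  · simp [Polynomial.coeff_X, h, Ne.symm h]

lemma S_le : S ≤ T'.comap phi := by
  rw [S, Subring.closure_le]
  intro x hx
  simp only [Set.mem_insert_iff, Set.mem_singleton_iff] at hx
  rcases hx with rfl | rfl | rfl | rfl | rfl | rfl | rfl <;>
    simp only [SetLike.mem_coe, Subring.mem_comap, map_mul, map_pow, map_ofNat,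
      phi_b2, phi_b3, phi_b4, phi_b8]
  · exact twoX_mem_T'
  · exact T'.zero_mem
  · exact twoX_mem_T'
  · exact X_mem_T'
  · rw [mul_zero]; exact T'.zero_mem
  · have h : (Polynomial.X : Polynomial ℤ) * (2 * Polynomial.X) =
        Polynomial.X ^ 2 + Polynomial.X ^ 2 := by ring
    rw [h]; exact T'.add_mem X_mem_T' X_mem_T'
  · exact T'.neg_mem X_mem_T'

/-- In `jF`, the element `b₂b₄ + n·b₂³` lies in the subring `S` generated by
`2b₂, b₃, b₄, b₂², b₂b₃, b₂b₄, b₈` if and only if `n` is even. -/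
theorem stmt11 : ∀ n : ℤ, (b2 * b4 + (n : jF) * b2 ^ 3 ∈ S) ↔ 2 ∣ n := by
  intro n
  constructor
  · intro h
    have hmem : phi (b2 * b4 + (n : jF) * b2 ^ 3) ∈ T' := S_le h
    have hval : phi (b2 * b4 + (n : jF) * b2 ^ 3) =
        Polynomial.C 2 * Polynomial.X ^ 2 + Polynomial.C n * Polynomial.X ^ 3 := by
      rw [map_add, map_mul, map_mul, map_pow, map_intCast, phi_b2, phi_b4,
        ← Polynomial.C_eq_intCast n]
      have hC2 : (Polynomial.C (2 : ℤ)) = 2 := by norm_num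
      rw [hC2]
      simp only [Int.cast_id]
      ring
    have h3 := hmem 3 ⟨1, by norm_num⟩
    rw [hval] at h3
    simpa [Polynomial.coeff_C_mul, Polynomial.coeff_X_pow] using h3
  · rintro ⟨m, rfl⟩
    have h1 : b2 * b4 ∈ S := Subring.subset_closure (by simp)
    have h2 : ((2 * m : ℤ) : jF) * b2 ^ 3 = (m : jF) * ((2 * b2) * b2 ^ 2) := by
      push_cast
      ring
    rw [h2]
    exact S.add_mem h1 (S.mul_mem (intCast_mem S m)
      (S.mul_mem (Subring.subset_closure (by simp)) (Subring.subset_closure (by simp))))
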